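/- arXiv:1204.1687 — 7 statements merged into one kernel-verified Lean document; each statement's English description precedes it below -/
import Mathlib

section
/- Let d ≥ 2, let x_1, …, x_d be distinct reals and y_1, …, y_d be distinct reals, let G = {(x_i, y_j) : 1 ≤ i, j ≤ d} ⊂ ℝ², and let μ be a finitely atomic positive measure on ℝ² whose support is exactly G. Then for every k with 1 ≤ k ≤ d − 1, rank M_{d+k}[μ] = rank M_{d+k−1}[μ] + (d − k − 1). In particular rank M_{2d−1}[μ] = rank M_{2d−2}[μ], while rank M_{d+k}[μ] > rank M_{d+k−1}[μ] for 1 ≤ k ≤ d − 2. -/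
open Finset Matrix

noncomputable section

/-- Monomial indices of degree at most `d` (the monomial `x^i y^j` is the pair `(i,j)`). -/
abbrev Idx (d : ℕ) : Type := {ij : ℕ × ℕ // ij.1 + ij.2 ≤ d}

/-- Monomial indices of degree exactly `e`. -/
abbrev Jdx (e : ℕ) : Type := {ij : ℕ × ℕ // ij.1 + ij.2 = e}

instance (d : ℕ) : Fintype (Idx d) :=
  Fintype.subtype
    ((Finset.range (d + 1) ×ˢ Finset.range (d + 1)).filter fun ij => ij.1 + ij.2 ≤ d)
    (by
      rintro ⟨a, b⟩
      simp only [Finset.mem_filter, Finset.mem_product, Finset.mem_range]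
      omega)

instance (e : ℕ) : Fintype (Jdx e) :=
  Fintype.subtype
    ((Finset.range (e + 1) ×ˢ Finset.range (e + 1)).filter fun ij => ij.1 + ij.2 = e)
    (by
      rintro ⟨a, b⟩
      simp only [Finset.mem_filter, Finset.mem_product, Finset.mem_range]
      omega)

/-- The moment matrix `M_d(β)`: rows and columns are indexed by monomials of degree ≤ d,
with entry in row `(i,j)`, column `(k,l)` equal to `β (i+k) (j+l)`. -/
def momentMatrix (d : ℕ) (β : ℕ → ℕ → ℝ) : Matrix (Idx d) (Idx d) ℝ :=
  Matrix.of fun r c => β (r.1.1 + c.1.1) (r.1.2 + c.1.2)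

/-- The coefficient vector (truncated to degree ≤ d) of the polynomial with
coefficient function `a`. -/
def coeffVec (d : ℕ) (a : ℕ → ℕ → ℝ) : Idx d → ℝ := fun c => a c.1.1 c.1.2

/-- `p(X,Y)`: the linear combination of the columns of `M_d(β)` given by the
coefficient function `a` of `p`. -/
def polyCol (d : ℕ) (β : ℕ → ℕ → ℝ) (a : ℕ → ℕ → ℝ) : Idx d → ℝ :=
  momentMatrix d β *ᵥ coeffVec d a

/-- Coefficient function of the monomial `x^u y^v`. -/
def monoC (u v : ℕ) : ℕ → ℕ → ℝ := fun k l => if k = u ∧ l = v then 1 else 0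

/-- Coefficient function of `x^u y^v * p`, where `p` has coefficient function `a`. -/
def shiftC (u v : ℕ) (a : ℕ → ℕ → ℝ) : ℕ → ℕ → ℝ :=
  fun k l => if u ≤ k ∧ v ≤ l then a (k - u) (l - v) else 0

/-- The polynomial with coefficient function `a` has (total) degree at most `D`. -/
def DegLE (a : ℕ → ℕ → ℝ) (D : ℕ) : Prop := ∀ k l : ℕ, D < k + l → a k l = 0

/-- Coefficient function of the product of two polynomials. -/
def cMul (a b : ℕ → ℕ → ℝ) : ℕ → ℕ → ℝ := fun k l =>
  ∑ i ∈ Finset.range (k + 1), ∑ j ∈ Finset.range (l + 1), a i j * b (k - i) (l - j)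

/-- `M_d(β)` is recursively generated: whenever `p, q, pq` all have degree ≤ d and
`p(X,Y) = 0`, also `(pq)(X,Y) = 0`. -/
def RecursivelyGenerated (d : ℕ) (β : ℕ → ℕ → ℝ) : Prop :=
  ∀ a b : ℕ → ℕ → ℝ, DegLE a d → DegLE b d → DegLE (cMul a b) d →
    polyCol d β a = 0 → polyCol d β (cMul a b) = 0

open MeasureTheory

/-- The moment multisequence of a measure `μ` on `ℝ²`. -/
def momentsOf (μ : Measure (ℝ × ℝ)) : ℕ → ℕ → ℝ :=
  fun i j => ∫ z : ℝ × ℝ, z.1 ^ i * z.2 ^ j ∂μ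


namespace Statement7Aux

open MeasureTheory Submodule Matrix Finset

/-- The Vandermonde determinant of an injective tuple is a unit. -/
lemma vand_isUnit {d : ℕ} {x : Fin d → ℝ} (hx : Function.Injective x) :
    IsUnit (Matrix.vandermonde x).det := by
  rw [Matrix.det_vandermonde]
  refine isUnit_iff_ne_zero.2 (Finset.prod_ne_zero_iff.2 fun i _ => ?_)
  refine Finset.prod_ne_zero_iff.2 fun j hj => sub_ne_zero.2 fun he => ?_
  have : j = i := hx he
  rw [this] at hj
  exact absurd (Finset.mem_Ioi.1 hj) (lt_irrefl i)

/-- The power functions `p ↦ x p ^ a`, `a : Fin d`, are linearly independent. -/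
lemma vand_indep {d : ℕ} {x : Fin d → ℝ} (hx : Function.Injective x) :
    LinearIndependent ℝ (fun a : Fin d => fun p : Fin d => x p ^ (a : ℕ)) := by
  classical
  have h : IsUnit (Matrix.vandermonde x)ᵀ := by
    rw [Matrix.isUnit_iff_isUnit_det, Matrix.det_transpose]
    exact vand_isUnit hx
  have := Matrix.linearIndependent_rows_iff_isUnit.2 h
  exact this

/-- The bivariate monomial functions on the grid are linearly independent. -/
lemma phi_indep {d : ℕ} {x y : Fin d → ℝ} (hx : Function.Injective x)
    (hy : Function.Injective y) :
    LinearIndependent ℝ (fun ab : Fin d × Fin d =>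
      fun pq : Fin d × Fin d => x pq.1 ^ (ab.1 : ℕ) * y pq.2 ^ (ab.2 : ℕ)) := by
  classical
  set K : Matrix (Fin d × Fin d) (Fin d × Fin d) ℝ :=
    Matrix.kroneckerMap (· * ·) (Matrix.vandermonde x)ᵀ (Matrix.vandermonde y)ᵀ with hK
  have hunit : IsUnit K := by
    rw [Matrix.isUnit_iff_isUnit_det, hK, Matrix.det_kronecker, Matrix.det_transpose,
      Matrix.det_transpose]
    exact ((vand_isUnit hx).pow _).mul ((vand_isUnit hy).pow _)
  have h := Matrix.linearIndependent_rows_iff_isUnit.2 hunit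
  exact h

/-- Any power function lies in the span of the reduced power functions. -/
lemma pow_mem_span {d : ℕ} (hd : 0 < d) {x : Fin d → ℝ} (hx : Function.Injective x) (i : ℕ) :
    (fun p : Fin d => x p ^ i) ∈
      span ℝ {g : Fin d → ℝ | ∃ a : ℕ, a ≤ i ∧ a ≤ d - 1 ∧ g = fun p => x p ^ a} := by
  rcases le_or_gt i (d - 1) with h | h
  · exact subset_span ⟨i, le_rfl, h, rfl⟩
  · have : Nonempty (Fin d) := ⟨⟨0, hd⟩⟩
    have htop : span ℝ (Set.range (fun a : Fin d => fun p : Fin d => x p ^ (a : ℕ))) = ⊤ :=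
      (vand_indep hx).span_eq_top_of_card_eq_finrank (by simp)
    have hmem : (fun p : Fin d => x p ^ i) ∈
        span ℝ (Set.range (fun a : Fin d => fun p : Fin d => x p ^ (a : ℕ))) := by
      rw [htop]; trivial
    refine span_mono ?_ hmem
    rintro _ ⟨a, rfl⟩
    exact ⟨(a : ℕ), by omega, by omega, rfl⟩

/-- Tensor products of spans. -/
lemma tensor_mem_span {d : ℕ} {S T : Set (Fin d → ℝ)} {u v : Fin d → ℝ}
    (hu : u ∈ span ℝ S) (hv : v ∈ span ℝ T) :
    (fun pq : Fin d × Fin d => u pq.1 * v pq.2) ∈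
      span ℝ {w : Fin d × Fin d → ℝ | ∃ s ∈ S, ∃ t ∈ T,
        w = fun pq : Fin d × Fin d => s pq.1 * t pq.2} := by
  induction hu using span_induction with
  | mem s hs =>
    induction hv using span_induction with
    | mem t ht => exact subset_span ⟨s, hs, t, ht, rfl⟩
    | zero =>
      have h0 : (fun pq : Fin d × Fin d => s pq.1 * (0 : Fin d → ℝ) pq.2)
          = (0 : Fin d × Fin d → ℝ) := by funext pq; simp
      rw [h0]; exact zero_mem _
    | add v w _ _ ihv ihw =>
      have hadd : (fun pq : Fin d × Fin d => s pq.1 * (v + w) pq.2)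
          = (fun pq : Fin d × Fin d => s pq.1 * v pq.2)
            + fun pq : Fin d × Fin d => s pq.1 * w pq.2 := by
        funext pq; simp [mul_add]
      rw [hadd]; exact add_mem ihv ihw
    | smul c v _ ihv =>
      have hsmul : (fun pq : Fin d × Fin d => s pq.1 * (c • v) pq.2)
          = c • fun pq : Fin d × Fin d => s pq.1 * v pq.2 := by
        funext pq; simp [smul_eq_mul]; ring
      rw [hsmul]; exact smul_mem _ _ ihv
  | zero =>
    have h0 : (fun pq : Fin d × Fin d => (0 : Fin d → ℝ) pq.1 * v pq.2)
        = (0 : Fin d × Fin d → ℝ) := by funext pq; simp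
    rw [h0]; exact zero_mem _
  | add u w _ _ ihu ihw =>
    have hadd : (fun pq : Fin d × Fin d => (u + w) pq.1 * v pq.2)
        = (fun pq : Fin d × Fin d => u pq.1 * v pq.2)
          + fun pq : Fin d × Fin d => w pq.1 * v pq.2 := by
      funext pq; simp [add_mul]
    rw [hadd]; exact add_mem ihu ihw
  | smul c u _ ihu =>
    have hsmul : (fun pq : Fin d × Fin d => (c • u) pq.1 * v pq.2)
        = c • fun pq : Fin d × Fin d => u pq.1 * v pq.2 := by
      funext pq; simp [smul_eq_mul]; ring
    rw [hsmul]; exact smul_mem _ _ ihu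


lemma moments_eq {d : ℕ} (x y : Fin d → ℝ) (ρ : Fin d → Fin d → ℝ) (hρ : ∀ i j, 0 < ρ i j)
    (μ : Measure (ℝ × ℝ))
    (hμ : μ = ∑ i : Fin d, ∑ j : Fin d,
      ENNReal.ofReal (ρ i j) • Measure.dirac ((x i, y j) : ℝ × ℝ)) (i j : ℕ) :
    momentsOf μ i j = ∑ a : Fin d, ∑ b : Fin d, ρ a b * (x a ^ i * y b ^ j) := by
  subst hμ
  have hint : ∀ (p : ℝ × ℝ) (c : ℝ), 0 < c →
      Integrable (fun z : ℝ × ℝ => z.1 ^ i * z.2 ^ j)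
        ((ENNReal.ofReal c) • Measure.dirac p) := by
    intro p c hc
    refine (integrable_smul_measure (ENNReal.ofReal_pos.2 hc).ne' ENNReal.ofReal_ne_top).2 ?_
    exact (integrable_const _).congr (ae_eq_dirac _).symm
  show (∫ z : ℝ × ℝ, z.1 ^ i * z.2 ^ j
      ∂(∑ a : Fin d, ∑ b : Fin d, ENNReal.ofReal (ρ a b) • Measure.dirac (x a, y b))) = _
  rw [integral_finset_sum_measure
    (fun a _ => integrable_finset_sum_measure.2 fun b _ => hint _ _ (hρ a b))]
  refine Finset.sum_congr rfl fun a _ => ?_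
  rw [integral_finset_sum_measure (fun b _ => hint _ _ (hρ a b))]
  refine Finset.sum_congr rfl fun b _ => ?_
  rw [integral_smul_measure, integral_dirac]
  simp [ENNReal.toReal_ofReal (hρ a b).le]


lemma rank_eq_card {d : ℕ} (hd : 2 ≤ d) (x y : Fin d → ℝ)
    (hx : Function.Injective x) (hy : Function.Injective y)
    (ρ : Fin d → Fin d → ℝ) (hρ : ∀ i j, 0 < ρ i j)
    (μ : Measure (ℝ × ℝ))
    (hμ : μ = ∑ i : Fin d, ∑ j : Fin d,
      ENNReal.ofReal (ρ i j) • Measure.dirac ((x i, y j) : ℝ × ℝ)) (n : ℕ) :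
    (momentMatrix n (momentsOf μ)).rank
      = Fintype.card {ab : Fin d × Fin d // (ab.1 : ℕ) + (ab.2 : ℕ) ≤ n} := by
  classical
  have hd0 : 0 < d := by omega
  set E : Matrix (Fin d × Fin d) (Idx n) ℝ :=
    Matrix.of (fun p m => x p.1 ^ m.1.1 * y p.2 ^ m.1.2) with hE
  set W : Matrix (Fin d × Fin d) (Fin d × Fin d) ℝ :=
    Matrix.diagonal (fun p => Real.sqrt (ρ p.1 p.2)) with hW
  have hfact : momentMatrix n (momentsOf μ) = (W * E)ᵀ * (W * E) := by
    ext r c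
    show momentsOf μ (r.1.1 + c.1.1) (r.1.2 + c.1.2) = _
    rw [moments_eq x y ρ hρ μ hμ]
    rw [Matrix.mul_apply]
    simp only [Matrix.transpose_apply, hW, Matrix.diagonal_mul, hE, Matrix.of_apply]
    rw [Fintype.sum_prod_type]
    refine Finset.sum_congr rfl fun a _ => Finset.sum_congr rfl fun b _ => ?_
    have hs : Real.sqrt (ρ a b) * Real.sqrt (ρ a b) = ρ a b :=
      Real.mul_self_sqrt (hρ a b).le
    dsimp only
    rw [pow_add, pow_add]
    ring_nf
    rw [Real.sq_sqrt (hρ a b).le]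
    ring
  have hWdet : IsUnit W.det := by
    rw [hW, Matrix.det_diagonal]
    refine isUnit_iff_ne_zero.2 (Finset.prod_ne_zero_iff.2 fun p _ => ?_)
    exact (Real.sqrt_pos.2 (hρ p.1 p.2)).ne'
  rw [hfact, Matrix.rank_transpose_mul_self, Matrix.rank_mul_eq_right_of_isUnit_det W E hWdet]
  rw [Matrix.rank_eq_finrank_span_cols]
  set φf : Fin d × Fin d → (Fin d × Fin d → ℝ) :=
    fun ab => fun pq : Fin d × Fin d => x pq.1 ^ (ab.1 : ℕ) * y pq.2 ^ (ab.2 : ℕ) with hφ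
  have hspan : span ℝ (Set.range Eᵀ)
      = span ℝ (Set.range fun t : {ab : Fin d × Fin d // (ab.1 : ℕ) + (ab.2 : ℕ) ≤ n} =>
          φf t.1) := by
    apply le_antisymm
    · rw [span_le]
      rintro _ ⟨m, rfl⟩
      have hcol : Eᵀ m = fun pq : Fin d × Fin d => x pq.1 ^ m.1.1 * y pq.2 ^ m.1.2 := rfl
      rw [hcol]
      have h3 := tensor_mem_span (pow_mem_span hd0 hx m.1.1) (pow_mem_span hd0 hy m.1.2)
      refine span_mono ?_ h3
      rintro _ ⟨s, ⟨a, ha1, ha2, rfl⟩, t, ⟨b, hb1, hb2, rfl⟩, rfl⟩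
      have hm := m.2
      refine ⟨⟨(⟨a, by omega⟩, ⟨b, by omega⟩), by simp; omega⟩, rfl⟩
    · rw [span_le]
      rintro _ ⟨t, rfl⟩
      exact subset_span ⟨⟨((t.1.1 : ℕ), (t.1.2 : ℕ)), t.2⟩, rfl⟩
  rw [show Set.range E.col = Set.range Eᵀ from rfl, hspan]
  have hli : LinearIndependent ℝ
      (fun t : {ab : Fin d × Fin d // (ab.1 : ℕ) + (ab.2 : ℕ) ≤ n} => φf t.1) :=
    (phi_indep hx hy).comp _ Subtype.val_injective
  rw [finrank_span_eq_card hli]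

lemma card_step {d k : ℕ} (hd : 2 ≤ d) (hk1 : 1 ≤ k) (hk2 : k ≤ d - 1) :
    Fintype.card {ab : Fin d × Fin d // (ab.1 : ℕ) + (ab.2 : ℕ) ≤ d + k}
      = Fintype.card {ab : Fin d × Fin d // (ab.1 : ℕ) + (ab.2 : ℕ) ≤ d + k - 1}
        + (d - k - 1) := by
  classical
  rw [Fintype.card_subtype, Fintype.card_subtype]
  have hsplit : (Finset.univ.filter fun ab : Fin d × Fin d => (ab.1 : ℕ) + (ab.2 : ℕ) ≤ d + k)
      = (Finset.univ.filter fun ab : Fin d × Fin d => (ab.1 : ℕ) + (ab.2 : ℕ) ≤ d + k - 1)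
        ∪ (Finset.univ.filter fun ab : Fin d × Fin d => (ab.1 : ℕ) + (ab.2 : ℕ) = d + k) := by
    rw [← Finset.filter_or]
    refine Finset.filter_congr fun ab _ => ?_
    constructor
    · intro h; omega
    · intro h; omega
  have hdisj : Disjoint
      (Finset.univ.filter fun ab : Fin d × Fin d => (ab.1 : ℕ) + (ab.2 : ℕ) ≤ d + k - 1)
      (Finset.univ.filter fun ab : Fin d × Fin d => (ab.1 : ℕ) + (ab.2 : ℕ) = d + k) := by
    rw [Finset.disjoint_left]
    intro ab h1 h2
    simp only [Finset.mem_filter, Finset.mem_univ, true_and] at h1 h2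
    omega
  rw [hsplit, Finset.card_union_of_disjoint hdisj]
  congr 1
  have hbij : (Finset.univ.filter
      fun ab : Fin d × Fin d => (ab.1 : ℕ) + (ab.2 : ℕ) = d + k).card
      = (Finset.Ico (k + 1) d).card := by
    refine Finset.card_bij' (fun ab _ => (ab.1 : ℕ))
      (fun a ha => (⟨a, (Finset.mem_Ico.1 ha).2⟩,
        ⟨d + k - a, by have := (Finset.mem_Ico.1 ha).1; omega⟩)) ?_ ?_ ?_ ?_
    · intro ab hab
      simp only [Finset.mem_filter, Finset.mem_univ, true_and] at hab
      have h1 := ab.1.isLt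
      have h2 := ab.2.isLt
      simp only [Finset.mem_Ico]
      omega
    · intro a ha
      simp only [Finset.mem_filter, Finset.mem_univ, true_and, Fin.val_mk]
      have h1 := (Finset.mem_Ico.1 ha).1
      have h2 := (Finset.mem_Ico.1 ha).2
      omega
    · intro ab hab
      simp only [Finset.mem_filter, Finset.mem_univ, true_and] at hab
      ext
      · simp
      · simp; omega
    · intro a ha
      simp
  rw [hbij, Nat.card_Ico]
  omega

end Statement7Aux



/-- For the finitely atomic measure `μ` with support exactly the
`d × d` grid `{(x_i, y_j)}` (d ≥ 2):
`rank M_{d+k}[μ] = rank M_{d+k-1}[μ] + (d - k - 1)` for `1 ≤ k ≤ d - 1`; in particular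
`rank M_{2d-1}[μ] = rank M_{2d-2}[μ]`, while `rank M_{d+k}[μ] > rank M_{d+k-1}[μ]` for
`1 ≤ k ≤ d - 2`. -/
theorem statement7 (d : ℕ) (hd : 2 ≤ d) (x y : Fin d → ℝ)
    (hx : Function.Injective x) (hy : Function.Injective y)
    (ρ : Fin d → Fin d → ℝ) (hρ : ∀ i j, 0 < ρ i j)
    (μ : Measure (ℝ × ℝ))
    (hμ : μ = ∑ i : Fin d, ∑ j : Fin d,
      ENNReal.ofReal (ρ i j) • Measure.dirac ((x i, y j) : ℝ × ℝ)) :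
    (∀ k : ℕ, 1 ≤ k → k ≤ d - 1 →
      (momentMatrix (d + k) (momentsOf μ)).rank
        = (momentMatrix (d + k - 1) (momentsOf μ)).rank + (d - k - 1)) ∧
    (momentMatrix (2 * d - 1) (momentsOf μ)).rank
      = (momentMatrix (2 * d - 2) (momentsOf μ)).rank ∧
    (∀ k : ℕ, 1 ≤ k → k ≤ d - 2 →
      (momentMatrix (d + k - 1) (momentsOf μ)).rank
        < (momentMatrix (d + k) (momentsOf μ)).rank) := by
  have key : ∀ n : ℕ, (momentMatrix n (momentsOf μ)).rank
      = Fintype.card {ab : Fin d × Fin d // (ab.1 : ℕ) + (ab.2 : ℕ) ≤ n} :=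
    fun n => Statement7Aux.rank_eq_card hd x y hx hy ρ hρ μ hμ n
  refine ⟨fun k hk1 hk2 => ?_, ?_, fun k hk1 hk2 => ?_⟩
  · rw [key, key, Statement7Aux.card_step hd hk1 hk2]
  · rw [key, key]
    have h1 := Statement7Aux.card_step (d := d) (k := d - 1) hd (by omega) (by omega)
    have e1 : d + (d - 1) = 2 * d - 1 := by omega
    have e2 : 2 * d - 1 - 1 = 2 * d - 2 := by omega
    rw [e1, e2] at h1
    omega
  · rw [key, key]
    have h1 := Statement7Aux.card_step (d := d) (k := k) hd hk1 (by omega)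
    omega
end
end

section
/- Let d ≥ 1, let x_1, …, x_d be distinct reals and y_1, …, y_d be distinct reals, let G = {(x_i, y_j) : 1 ≤ i, j ≤ d} ⊂ ℝ², and let μ be a finitely atomic positive measure on ℝ² whose support is exactly G. Then M_{d−1}[μ] is positive definite (in particular, invertible). -/
open Finset Matrix

noncomputable section

open MeasureTheory

-- vanishing lemma
lemma vanish_aux (d : ℕ) (hd : 1 ≤ d) (x y : Fin d → ℝ)
    (hx : Function.Injective x) (hy : Function.Injective y) (v : Idx (d - 1) → ℝ)
    (h : ∀ a b : Fin d, ∑ c : Idx (d - 1), v c * (x a ^ c.1.1 * y b ^ c.1.2) = 0) :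
    v = 0 := by
  set C : Matrix (Fin d) (Fin d) ℝ :=
    Matrix.of fun p q : Fin d => if hpq : (p : ℕ) + (q : ℕ) ≤ d - 1 then v ⟨(p, q), hpq⟩ else 0
    with hC
  have hsum : ∀ a b : Fin d,
      ∑ p : Fin d, ∑ q : Fin d, C p q * (x a ^ (p : ℕ) * y b ^ (q : ℕ))
        = ∑ c : Idx (d - 1), v c * (x a ^ c.1.1 * y b ^ c.1.2) := by
    intro a b
    rw [← Finset.sum_product']
    rw [← Finset.sum_filter_add_sum_filter_not (Finset.univ ×ˢ Finset.univ)
      (fun pq : Fin d × Fin d => (pq.1 : ℕ) + (pq.2 : ℕ) ≤ d - 1)]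
    have h2 : ∑ pq ∈ (Finset.univ ×ˢ Finset.univ).filter
        (fun pq : Fin d × Fin d => ¬((pq.1 : ℕ) + (pq.2 : ℕ) ≤ d - 1)),
        C pq.1 pq.2 * (x a ^ (pq.1 : ℕ) * y b ^ (pq.2 : ℕ)) = 0 := by
      refine Finset.sum_eq_zero fun pq hpq => ?_
      simp only [Finset.mem_filter] at hpq
      rw [hC]
      simp [dif_neg hpq.2]
    rw [h2, add_zero]
    refine Finset.sum_bij'
      (fun (pq : Fin d × Fin d) (hpq : pq ∈ (Finset.univ ×ˢ Finset.univ).filter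
          (fun pq : Fin d × Fin d => (pq.1 : ℕ) + (pq.2 : ℕ) ≤ d - 1)) =>
        (⟨((pq.1 : ℕ), (pq.2 : ℕ)), by simpa using (Finset.mem_filter.mp hpq).2⟩ : Idx (d - 1)))
      (fun (c : Idx (d - 1)) _ =>
        ((⟨c.1.1, by have := c.2; omega⟩, ⟨c.1.2, by have := c.2; omega⟩) : Fin d × Fin d))
      (fun _ _ => Finset.mem_univ _)
      (fun c _ => by
        simp only [Finset.mem_filter, Finset.mem_product, Finset.mem_univ, true_and]
        exact c.2)
      (fun pq hpq => by simp)
      (fun c _ => by simp)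
      (fun pq hpq => by
        rw [hC]
        simp only [of_apply]
        rw [dif_pos (by simpa using (Finset.mem_filter.mp hpq).2)])
  have hmat : vandermonde x * C * (vandermonde y)ᵀ = 0 := by
    ext a b
    have : (vandermonde x * C * (vandermonde y)ᵀ) a b
        = ∑ p : Fin d, ∑ q : Fin d, C p q * (x a ^ (p : ℕ) * y b ^ (q : ℕ)) := by
      simp only [Matrix.mul_apply, Matrix.transpose_apply, vandermonde, of_apply,
        Finset.sum_mul]
      rw [Finset.sum_comm]
      exact Finset.sum_congr rfl fun p _ => Finset.sum_congr rfl fun q _ => by ring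
    rw [this, hsum a b, h a b]
    simp
  haveI : Invertible (vandermonde x) :=
    (vandermonde x).invertibleOfIsUnitDet
      (Ne.isUnit (Matrix.det_vandermonde_ne_zero_iff.mpr hx))
  haveI : Invertible (vandermonde y) :=
    (vandermonde y).invertibleOfIsUnitDet
      (Ne.isUnit (Matrix.det_vandermonde_ne_zero_iff.mpr hy))
  haveI : Invertible (vandermonde y)ᵀ := Matrix.invertibleTranspose (vandermonde y)
  have hC0 : C = 0 := by
    have h1 : C * (vandermonde y)ᵀ = 0 := by
      have := congrArg (fun M => (vandermonde x)⁻¹ * M) hmat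
      simpa [Matrix.mul_assoc, Matrix.inv_mul_cancel_left_of_invertible] using this
    have := congrArg (fun M => M * ((vandermonde y)ᵀ)⁻¹) h1
    simpa [Matrix.mul_inv_cancel_right_of_invertible] using this
  funext c
  have hc1 : c.1.1 < d := by have := c.2; omega
  have hc2 : c.1.2 < d := by have := c.2; omega
  have := congrFun (congrFun hC0 ⟨c.1.1, hc1⟩) ⟨c.1.2, hc2⟩
  rw [hC] at this
  simp only [of_apply, Matrix.zero_apply] at this
  rw [dif_pos (by simpa using c.2)] at this
  simpa using this


/-- For the finitely atomic measure `μ` with support exactly the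
`d × d` grid `{(x_i, y_j)}`, the moment matrix `M_{d-1}[μ]` is positive definite. -/
theorem statement8 (d : ℕ) (hd : 1 ≤ d) (x y : Fin d → ℝ)
    (hx : Function.Injective x) (hy : Function.Injective y)
    (ρ : Fin d → Fin d → ℝ) (hρ : ∀ i j, 0 < ρ i j)
    (μ : Measure (ℝ × ℝ))
    (hμ : μ = ∑ i : Fin d, ∑ j : Fin d,
      ENNReal.ofReal (ρ i j) • Measure.dirac ((x i, y j) : ℝ × ℝ)) :
    (momentMatrix (d - 1) (momentsOf μ)).PosDef := by
  -- Step 1: compute the moments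
  have hint : ∀ (i j : ℕ) (p : ℝ × ℝ) (c : ℝ),
      Integrable (fun z : ℝ × ℝ => z.1 ^ i * z.2 ^ j)
        (ENNReal.ofReal c • Measure.dirac p) :=
    fun i j p c =>
      (((integrable_const _).congr (ae_eq_dirac _).symm).smul_measure ENNReal.ofReal_ne_top)
  have hβ : ∀ i j : ℕ,
      momentsOf μ i j = ∑ a : Fin d, ∑ b : Fin d, ρ a b * (x a ^ i * y b ^ j) := by
    intro i j
    unfold momentsOf
    rw [hμ, integral_finset_sum_measure (fun a _ =>
      integrable_finset_sum_measure.mpr fun b _ => hint i j _ _)]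
    refine Finset.sum_congr rfl fun a _ => ?_
    rw [integral_finset_sum_measure (fun b _ => hint i j _ _)]
    refine Finset.sum_congr rfl fun b _ => ?_
    rw [integral_smul_measure, integral_dirac, ENNReal.toReal_ofReal (hρ a b).le]
    simp [mul_assoc]
  -- Step 2: quadratic form
  have key : ∀ v : Idx (d - 1) → ℝ,
      v ⬝ᵥ (momentMatrix (d - 1) (momentsOf μ) *ᵥ v)
        = ∑ a : Fin d, ∑ b : Fin d,
            ρ a b * (∑ c : Idx (d - 1), v c * (x a ^ c.1.1 * y b ^ c.1.2)) ^ 2 := by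
    intro v
    simp only [dotProduct, mulVec, momentMatrix, of_apply, hβ, pow_add, sq,
      Finset.sum_mul, Finset.mul_sum]
    conv_lhs => enter [2, r]; rw [Finset.sum_comm]
    conv_lhs => enter [2, r, 2, a]; rw [Finset.sum_comm]
    rw [Finset.sum_comm]
    conv_lhs => enter [2, a]; rw [Finset.sum_comm]
    refine Finset.sum_congr rfl fun a _ => Finset.sum_congr rfl fun b _ =>
      Finset.sum_congr rfl fun r _ => Finset.sum_congr rfl fun c _ => by ring
  rw [Matrix.posDef_iff_dotProduct_mulVec]
  constructor
  · ext r c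
    simp only [momentMatrix, of_apply, Matrix.conjTranspose_apply, star_trivial]
    rw [add_comm c.1.1, add_comm c.1.2]
  · intro v hv
    have hstar : star v = v := by
      funext c; simp
    rw [hstar, key]
    have hnz : ∃ a b : Fin d, (∑ c : Idx (d - 1), v c * (x a ^ c.1.1 * y b ^ c.1.2)) ≠ 0 := by
      by_contra hc
      push_neg at hc
      exact hv (vanish_aux d hd x y hx hy v hc)
    obtain ⟨a, b, hab⟩ := hnz
    have hpos : ∀ a' b' : Fin d,
        0 ≤ ρ a' b' * (∑ c : Idx (d - 1), v c * (x a' ^ c.1.1 * y b' ^ c.1.2)) ^ 2 :=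
      fun a' b' => mul_nonneg (hρ a' b').le (sq_nonneg _)
    refine Finset.sum_pos' (fun a' _ => Finset.sum_nonneg fun b' _ => hpos a' b') ⟨a, Finset.mem_univ a, ?_⟩
    refine Finset.sum_pos' (fun b' _ => hpos a b') ⟨b, Finset.mem_univ b, ?_⟩
    exact mul_pos (hρ a b) (by positivity)
end
end

section
/- For N ≥ 1, let v_1, …, v_N be distinct points in ℝ². The multivariable Vandermonde matrix V_N of size N × N(N+1)/2, whose rows are indexed by i ∈ {1, …, N} and whose columns are indexed by the multi-indices α = (α_1, α_2) ∈ ℤ_{≥0}² with α_1 + α_2 ≤ N − 1, with (i, α) entry equal to v_i^α = (v_i)_1^{α_1} (v_i)_2^{α_2}, has rank exactly N. -/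
open Finset Matrix

noncomputable section

open MvPolynomial

/-- linear form vanishing at `b`, positive at `a` (when `a ≠ b`) -/
noncomputable def ell (a b : ℝ × ℝ) : MvPolynomial (Fin 2) ℝ :=
  C (a.1 - b.1) * (X 0 - C b.1) + C (a.2 - b.2) * (X 1 - C b.2)

lemma ell_totalDegree (a b : ℝ × ℝ) : (ell a b).totalDegree ≤ 1 := by
  unfold ell
  apply le_trans (totalDegree_add _ _)
  simp only [max_le_iff]
  constructor <;>
  · apply le_trans (totalDegree_mul _ _)
    simp only [totalDegree_C, zero_add]
    apply le_trans (totalDegree_sub_C_le _ _)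
    simp [totalDegree_X]

lemma ell_eval_self (a b : ℝ × ℝ) : eval ![b.1, b.2] (ell a b) = 0 := by
  simp [ell]

lemma ell_eval_other (a b : ℝ × ℝ) :
    eval ![a.1, a.2] (ell a b) = (a.1 - b.1)^2 + (a.2 - b.2)^2 := by
  simp [ell]; ring

/-- embed an `Idx d` as a finitely supported function on `Fin 2` -/
noncomputable def efun {d : ℕ} (α : Idx d) : Fin 2 →₀ ℕ :=
  Finsupp.single 0 α.1.1 + Finsupp.single 1 α.1.2

lemma efun_apply0 {d : ℕ} (α : Idx d) : efun α 0 = α.1.1 := by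
  simp [efun, Finsupp.single_apply]

lemma efun_apply1 {d : ℕ} (α : Idx d) : efun α 1 = α.1.2 := by
  simp [efun, Finsupp.single_apply]

lemma efun_injective {d : ℕ} : Function.Injective (efun (d := d)) := by
  intro α β h
  have h0 : efun α 0 = efun β 0 := by rw [h]
  have h1 : efun α 1 = efun β 1 := by rw [h]
  rw [efun_apply0, efun_apply0] at h0
  rw [efun_apply1, efun_apply1] at h1
  exact Subtype.ext (Prod.ext h0 h1)

lemma eval_eq_idx_sum {d : ℕ} (p : MvPolynomial (Fin 2) ℝ) (hp : p.totalDegree ≤ d)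
    (x : Fin 2 → ℝ) :
    ∑ α : Idx d, coeff (efun α) p * (x 0 ^ α.1.1 * x 1 ^ α.1.2) = eval x p := by
  have hsub : p.support ⊆ Finset.image efun (Finset.univ : Finset (Idx d)) := by
    intro s hs
    have hle : s 0 + s 1 ≤ d := by
      have := le_totalDegree hs
      have hsum : (s.sum fun _ e => e) = s 0 + s 1 := by
        rw [Finsupp.sum_fintype]
        · exact Fin.sum_univ_two s
        · intro; rfl
      omega
    refine Finset.mem_image.2 ⟨⟨(s 0, s 1), hle⟩, Finset.mem_univ _, ?_⟩
    ext i
    fin_cases i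
    · exact efun_apply0 _
    · exact efun_apply1 _
  rw [eval_eq']
  rw [Finset.sum_subset hsub (fun s _ hs => by
    rw [MvPolynomial.notMem_support_iff.1 hs, zero_mul])]
  rw [Finset.sum_image (fun a _ b _ h => efun_injective h)]
  refine Finset.sum_congr rfl fun α _ => ?_
  rw [Fin.prod_univ_two, efun_apply0, efun_apply1]

/-- For `N ≥ 1` distinct points `v_1, …, v_N` in `ℝ²`, the multivariable
Vandermonde matrix `V_N = (v_i^α)` (rows indexed by `i`, columns by multi-indices `α`
with `|α| ≤ N - 1`, of which there are `N(N+1)/2`) has rank exactly `N`. -/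
theorem statement9 (N : ℕ) (hN : 1 ≤ N) (v : Fin N → ℝ × ℝ)
    (hv : Function.Injective v) :
    (Matrix.of fun (i : Fin N) (α : Idx (N - 1)) =>
      (v i).1 ^ α.1.1 * (v i).2 ^ α.1.2).rank = N := by
  set M : Matrix (Fin N) (Idx (N - 1)) ℝ := Matrix.of fun i α =>
      (v i).1 ^ α.1.1 * (v i).2 ^ α.1.2 with hM
  -- Lagrange-type interpolation polynomials
  set P : Fin N → MvPolynomial (Fin 2) ℝ := fun j =>
    ∏ k ∈ Finset.univ.erase j, ell (v j) (v k) with hP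
  have hPdeg : ∀ j, (P j).totalDegree ≤ N - 1 := by
    intro j
    calc (P j).totalDegree ≤ ∑ k ∈ Finset.univ.erase j, (ell (v j) (v k)).totalDegree :=
          totalDegree_finset_prod _ _
      _ ≤ ∑ k ∈ Finset.univ.erase j, 1 :=
          Finset.sum_le_sum fun k _ => ell_totalDegree _ _
      _ = N - 1 := by
          rw [Finset.sum_const, smul_eq_mul, mul_one, Finset.card_erase_of_mem (mem_univ j),
            Finset.card_univ, Fintype.card_fin]
  have hPzero : ∀ i j : Fin N, i ≠ j → eval ![(v i).1, (v i).2] (P j) = 0 := by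
    intro i j hij
    rw [hP]
    rw [map_prod]
    exact Finset.prod_eq_zero (Finset.mem_erase.2 ⟨hij, mem_univ i⟩) (ell_eval_self _ _)
  have hPpos : ∀ j : Fin N, 0 < eval ![(v j).1, (v j).2] (P j) := by
    intro j
    rw [hP, map_prod]
    refine Finset.prod_pos fun k hk => ?_
    rw [ell_eval_other]
    have hne : v j ≠ v k := fun h => (Finset.mem_erase.1 hk).1.symm (hv h)
    have : (v j).1 - (v k).1 ≠ 0 ∨ (v j).2 - (v k).2 ≠ 0 := by
      by_contra h
      push_neg at h
      exact hne (Prod.ext (by linarith [h.1]) (by linarith [h.2]))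
    rcases this with h | h <;> positivity
  -- right factor
  set B : Matrix (Idx (N - 1)) (Fin N) ℝ := fun α j =>
    coeff (efun α) (P j) / eval ![(v j).1, (v j).2] (P j) with hB
  have hMB : M * B = 1 := by
    ext i j
    rw [Matrix.mul_apply]; simp only [hB, hM, Matrix.of_apply]
    simp only [← mul_div_assoc]
    rw [← Finset.sum_div]
    have : ∑ α : Idx (N - 1), (v i).1 ^ α.1.1 * (v i).2 ^ α.1.2 * coeff (efun α) (P j)
        = eval ![(v i).1, (v i).2] (P j) := by
      rw [← eval_eq_idx_sum (P j) (hPdeg j) ![(v i).1, (v i).2]]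
      refine Finset.sum_congr rfl fun α _ => ?_
      simp only [Matrix.cons_val_zero, Matrix.cons_val_one, Matrix.head_cons]
      ring
    rw [this]
    rcases eq_or_ne i j with rfl | hij
    · rw [div_self (hPpos i).ne', Matrix.one_apply_eq]
    · rw [hPzero i j hij, zero_div, Matrix.one_apply_ne hij]
  have h1 : (M * B).rank = N := by rw [hMB, Matrix.rank_one, Fintype.card_fin]
  have hle : M.rank ≤ N := by
    simpa [Fintype.card_fin] using M.rank_le_card_height
  have hge : N ≤ M.rank := by
    calc N = (M * B).rank := h1.symm
      _ ≤ M.rank := Matrix.rank_mul_le_left M B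
  omega

end
end

section
/- Let d ≥ 1, let x_1, …, x_d be distinct reals and y_1, …, y_d be distinct reals, and set P(x,y) = ∏_{i=1}^d (x − x_i) and Q(x,y) = ∏_{j=1}^d (y − y_j). If f ∈ ℝ[x,y] has total degree ρ ≥ d and f vanishes at every point of the grid {(x_i, y_j) : 1 ≤ i, j ≤ d} (the real variety of the ideal generated by P and Q), then there exist u, v ∈ ℝ[x,y] with deg u ≤ ρ − d and deg v ≤ ρ − d such that f = uP + vQ. -/
open MvPolynomial Finset

noncomputable def e1 : MvPolynomial (Fin 1) ℝ ≃ₐ[ℝ] Polynomial ℝ :=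
  (MvPolynomial.finSuccEquiv ℝ 0).trans
    (Polynomial.mapAlgEquiv (MvPolynomial.isEmptyAlgEquiv ℝ (Fin 0)))

lemma e1_C (a : ℝ) : e1 (MvPolynomial.C a) = Polynomial.C a := by
  have h1 : (MvPolynomial.C a : MvPolynomial (Fin 1) ℝ) = algebraMap ℝ _ a := rfl
  rw [h1, AlgEquiv.commutes]
  simp [Polynomial.algebraMap_eq]

lemma e1_X : e1 (MvPolynomial.X 0) = Polynomial.X := by
  simp [e1, MvPolynomial.finSuccEquiv_X_zero, Polynomial.coe_mapAlgEquiv]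

lemma fse_C {n : ℕ} (c : MvPolynomial (Fin n) ℝ) :
    MvPolynomial.finSuccEquiv ℝ n (MvPolynomial.rename Fin.succ c) = Polynomial.C c := by
  have h : (MvPolynomial.finSuccEquiv ℝ n).toAlgHom.comp
      (MvPolynomial.rename (Fin.succ : Fin n → Fin (n+1))) = Polynomial.CAlgHom := by
    apply MvPolynomial.algHom_ext
    intro i
    simp [MvPolynomial.finSuccEquiv_X_succ, Polynomial.CAlgHom]
  exact DFunLike.congr_fun h c

lemma lemA {n : ℕ} (N : ℕ) (p : Polynomial (MvPolynomial (Fin n) ℝ))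
    (h : ∀ k, p.coeff k ≠ 0 → (p.coeff k).totalDegree + k ≤ N) :
    ((MvPolynomial.finSuccEquiv ℝ n).symm p).totalDegree ≤ N := by
  conv_lhs => rw [p.as_sum_support_C_mul_X_pow, map_sum]
  refine (MvPolynomial.totalDegree_finset_sum _ _).trans (Finset.sup_le ?_)
  intro k hk
  rw [map_mul, map_pow]
  have hX : (MvPolynomial.finSuccEquiv ℝ n).symm Polynomial.X = MvPolynomial.X 0 := by
    rw [AlgEquiv.symm_apply_eq, MvPolynomial.finSuccEquiv_X_zero]
  have hC : (MvPolynomial.finSuccEquiv ℝ n).symm (Polynomial.C (p.coeff k)) =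
      MvPolynomial.rename Fin.succ (p.coeff k) := by
    rw [AlgEquiv.symm_apply_eq, fse_C]
  rw [hX, hC]
  refine (MvPolynomial.totalDegree_mul _ _).trans ?_
  rw [MvPolynomial.totalDegree_X_pow]
  exact le_trans (Nat.add_le_add_right (MvPolynomial.totalDegree_rename_le _ _) _)
    (h k (Polynomial.mem_support_iff.mp hk))

lemma deg_e1_le (q : MvPolynomial (Fin 1) ℝ) : (e1 q).natDegree ≤ q.totalDegree := by
  have he : e1 q = Polynomial.map
      (↑(MvPolynomial.isEmptyAlgEquiv ℝ (Fin 0)) : MvPolynomial (Fin 0) ℝ →+* ℝ)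
      (MvPolynomial.finSuccEquiv ℝ 0 q) := rfl
  rw [he]
  refine Polynomial.natDegree_map_le.trans ?_
  rw [Polynomial.natDegree_le_iff_coeff_eq_zero]
  intro m hm
  by_contra hc
  have := MvPolynomial.totalDegree_coeff_finSuccEquiv_add_le q m hc
  omega

lemma deg_e1_symm (w : Polynomial ℝ) : (e1.symm w).totalDegree ≤ w.natDegree := by
  have he : e1.symm w = (MvPolynomial.finSuccEquiv ℝ 0).symm
      (Polynomial.map (↑(MvPolynomial.isEmptyAlgEquiv ℝ (Fin 0)).symm : ℝ →+* MvPolynomial (Fin 0) ℝ) w) := rfl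
  rw [he]
  refine lemA _ _ ?_
  intro k hk
  rw [Polynomial.coeff_map, RingHom.coe_coe] at hk ⊢
  have h0 : ((MvPolynomial.isEmptyAlgEquiv ℝ (Fin 0)).symm (w.coeff k)).totalDegree = 0 := by
    have h2 : (MvPolynomial.isEmptyAlgEquiv ℝ (Fin 0)).symm (w.coeff k)
        = MvPolynomial.C (w.coeff k) := by
      have h1 := AlgEquiv.commutes (MvPolynomial.isEmptyAlgEquiv ℝ (Fin 0)).symm (w.coeff k)
      simpa [MvPolynomial.algebraMap_eq] using h1
    rw [h2, MvPolynomial.totalDegree_C]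
  rw [h0, zero_add]
  refine Polynomial.le_natDegree_of_ne_zero ?_
  intro h; apply hk; rw [h, map_zero]

lemma e1_eval (c : ℝ) (q : MvPolynomial (Fin 1) ℝ) :
    Polynomial.eval c (e1 q) = MvPolynomial.eval (fun _ : Fin 1 => c) q := by
  induction q using MvPolynomial.induction_on with
  | C a => simp [e1_C]
  | add p q hp hq => simp [map_add, hp, hq]
  | mul_X p i hp =>
      have hi : i = 0 := Subsingleton.elim _ _
      rw [hi, map_mul, Polynomial.eval_mul, e1_X, map_mul, hp]
      simp

/-- Let `P(x,y) = ∏ (x - x_i)` and `Q(x,y) = ∏ (y - y_j)` for distinct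
reals `x_1, …, x_d` and distinct reals `y_1, …, y_d`. If `f ∈ ℝ[x,y]` has total degree
`ρ ≥ d` and vanishes on the grid `{(x_i, y_j)}` (the real variety of the ideal `(P,Q)`),
then `f = uP + vQ` with `deg u, deg v ≤ ρ - d`. -/
theorem statement12 (d : ℕ) (hd : 1 ≤ d) (x y : Fin d → ℝ)
    (hx : Function.Injective x) (hy : Function.Injective y)
    (P Q : MvPolynomial (Fin 2) ℝ)
    (hP : P = ∏ i : Fin d, (MvPolynomial.X 0 - MvPolynomial.C (x i)))
    (hQ : Q = ∏ j : Fin d, (MvPolynomial.X 1 - MvPolynomial.C (y j)))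
    (f : MvPolynomial (Fin 2) ℝ) (hρ : d ≤ f.totalDegree)
    (hvan : ∀ (i j : Fin d),
      MvPolynomial.eval (fun t : Fin 2 => if t = 0 then x i else y j) f = 0) :
    ∃ u v : MvPolynomial (Fin 2) ℝ,
      u.totalDegree ≤ f.totalDegree - d ∧ v.totalDegree ≤ f.totalDegree - d ∧
      f = u * P + v * Q := by
  classical
  set ρ := f.totalDegree with hρdef
  set E := MvPolynomial.finSuccEquiv ℝ 1 with hE
  set F := E f with hF
  -- one-variable machinery
  set P0 : Polynomial ℝ := ∏ i : Fin d, (Polynomial.X - Polynomial.C (x i)) with hP0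
  have hP0m : P0.Monic := Polynomial.monic_prod_of_monic _ _ fun i _ => Polynomial.monic_X_sub_C _
  have hP0d : P0.natDegree = d := by
    rw [hP0, Polynomial.natDegree_prod _ _ fun i _ => Polynomial.X_sub_C_ne_zero (x i)]
    simp [Polynomial.natDegree_X_sub_C]
  have hP0deg : P0.degree = (d : ℕ) := by
    rw [Polynomial.degree_eq_natDegree hP0m.ne_zero, hP0d]
  set Qc : Polynomial ℝ := ∏ j : Fin d, (Polynomial.X - Polynomial.C (y j)) with hQc
  have hQcm : Qc.Monic := Polynomial.monic_prod_of_monic _ _ fun j _ => Polynomial.monic_X_sub_C _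
  have hQcd : Qc.natDegree = d := by
    rw [hQc, Polynomial.natDegree_prod _ _ fun j _ => Polynomial.X_sub_C_ne_zero (y j)]
    simp [Polynomial.natDegree_X_sub_C]
  set ι : Polynomial ℝ →+* Polynomial (MvPolynomial (Fin 1) ℝ) :=
    Polynomial.mapRingHom (MvPolynomial.C) with hι
  set U : Polynomial (MvPolynomial (Fin 1) ℝ) :=
    ∑ k ∈ F.support, Polynomial.C (F.coeff k) * ι (Polynomial.X ^ k /ₘ P0) with hU
  set R : Polynomial (MvPolynomial (Fin 1) ℝ) :=
    ∑ k ∈ F.support, Polynomial.C (F.coeff k) * ι (Polynomial.X ^ k %ₘ P0) with hR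
  have hFk : ∀ k, F.coeff k ≠ 0 → (F.coeff k).totalDegree + k ≤ ρ := fun k hk =>
    MvPolynomial.totalDegree_coeff_finSuccEquiv_add_le f k hk
  have hFdecomp : F = ι P0 * U + R := by
    rw [hU, hR, Finset.mul_sum, ← Finset.sum_add_distrib]
    conv_lhs => rw [F.as_sum_support_C_mul_X_pow]
    refine Finset.sum_congr rfl fun k _ => ?_
    have h1 : ι P0 * (Polynomial.C (F.coeff k) * ι (Polynomial.X ^ k /ₘ P0)) +
        Polynomial.C (F.coeff k) * ι (Polynomial.X ^ k %ₘ P0) =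
        Polynomial.C (F.coeff k) * ι (Polynomial.X ^ k %ₘ P0 + P0 * (Polynomial.X ^ k /ₘ P0)) := by
      rw [map_add, map_mul]; ring
    rw [h1, Polynomial.modByMonic_add_div _ P0, map_pow]
    simp [hι]
  -- coefficients of R and U
  have hRcoeff : ∀ m, R.coeff m =
      ∑ k ∈ F.support, F.coeff k * MvPolynomial.C ((Polynomial.X ^ k %ₘ P0).coeff m) := by
    intro m
    rw [hR, Polynomial.finset_sum_coeff]
    exact Finset.sum_congr rfl fun k _ => by
      rw [Polynomial.coeff_C_mul]
      simp [hι, Polynomial.coeff_map]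
  have hUcoeff : ∀ m, U.coeff m =
      ∑ k ∈ F.support, F.coeff k * MvPolynomial.C ((Polynomial.X ^ k /ₘ P0).coeff m) := by
    intro m
    rw [hU, Polynomial.finset_sum_coeff]
    exact Finset.sum_congr rfl fun k _ => by
      rw [Polynomial.coeff_C_mul]
      simp [hι, Polynomial.coeff_map]
  -- R has X-degree < d
  have hRhigh : ∀ m, d ≤ m → R.coeff m = 0 := by
    intro m hm
    rw [hRcoeff m]
    refine Finset.sum_eq_zero fun k _ => ?_
    have hc : (Polynomial.X ^ k %ₘ P0).coeff m = 0 := by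
      refine Polynomial.coeff_eq_zero_of_degree_lt ?_
      refine (Polynomial.degree_modByMonic_lt _ hP0m).trans_le ?_
      rw [hP0deg]
      exact_mod_cast Nat.cast_le.mpr hm
    rw [hc]
    simp
  -- vanishing of R on the grid
  have hRzero : ∀ (j : Fin d),
      R.map (MvPolynomial.eval (fun _ : Fin 1 => y j) : MvPolynomial (Fin 1) ℝ →+* ℝ) = 0 := by
    intro j
    set φ : MvPolynomial (Fin 1) ℝ →+* ℝ := MvPolynomial.eval (fun _ : Fin 1 => y j) with hφ
    refine Polynomial.eq_zero_of_natDegree_lt_card_of_eval_eq_zero _ hx ?_ ?_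
    · intro i
      have h0 := hvan i j
      have hfun : (fun t : Fin 2 => if t = 0 then x i else y j) =
          Fin.cons (x i) (fun _ : Fin 1 => y j) := by
        funext t
        refine Fin.cases ?_ ?_ t
        · simp
        · intro w
          simp [Fin.cons_succ, Fin.succ_ne_zero]
      rw [hfun, MvPolynomial.eval_eq_eval_mv_eval'] at h0
      have hFf : MvPolynomial.finSuccEquiv ℝ 1 f = F := rfl
      rw [hFf, hFdecomp, Polynomial.map_add, Polynomial.map_mul, Polynomial.eval_add,
        Polynomial.eval_mul] at h0
      have hPb : Polynomial.map φ (ι P0) = P0 := by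
        rw [hι]
        show Polynomial.map φ (Polynomial.map MvPolynomial.C P0) = P0
        rw [Polynomial.map_map]
        have hid : φ.comp (MvPolynomial.C : ℝ →+* MvPolynomial (Fin 1) ℝ) = RingHom.id ℝ := by
          ext a
          simp [hφ]
        rw [hid, Polynomial.map_id]
      have hPe : Polynomial.eval (x i) P0 = 0 := by
        rw [hP0, Polynomial.eval_prod]
        exact Finset.prod_eq_zero (Finset.mem_univ i) (by simp)
      rw [hPb, hPe, zero_mul, zero_add] at h0
      exact h0
    · refine lt_of_le_of_lt (Polynomial.natDegree_map_le) ?_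
      rw [Fintype.card_fin]
      have h1 : R.natDegree ≤ d - 1 :=
        Polynomial.natDegree_le_iff_coeff_eq_zero.mpr fun m hm => hRhigh m (by omega)
      omega
  have hReval : ∀ m (j : Fin d), MvPolynomial.eval (fun _ : Fin 1 => y j) (R.coeff m) = 0 := by
    intro m j
    have := congrArg (fun p => Polynomial.coeff p m) (hRzero j)
    simpa [Polynomial.coeff_map] using this
  -- divisibility of coefficients of R
  have hdvd : ∀ m, Qc ∣ e1 (R.coeff m) := by
    intro m
    refine Fintype.prod_dvd_of_coprime (Polynomial.pairwise_coprime_X_sub_C hy) fun j => ?_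
    rw [Polynomial.dvd_iff_isRoot, Polynomial.IsRoot, e1_eval]
    exact hReval m j
  set Qy : MvPolynomial (Fin 1) ℝ := ∏ j : Fin d, (MvPolynomial.X 0 - MvPolynomial.C (y j))
    with hQy
  have he1Qy : e1 Qy = Qc := by
    rw [hQy, hQc, map_prod]
    exact Finset.prod_congr rfl fun j _ => by rw [map_sub, e1_X, e1_C]
  have hQy0 : Qy ≠ 0 := by
    intro h
    exact hQcm.ne_zero (by rw [← he1Qy, h, map_zero])
  obtain ⟨V, hV⟩ : Polynomial.C Qy ∣ R := by
    rw [Polynomial.C_dvd_iff_dvd_coeff]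
    intro m
    have h1 : e1 Qy ∣ e1 (R.coeff m) := by rw [he1Qy]; exact hdvd m
    have h2 := map_dvd e1.symm h1
    simpa using h2
  -- total degree bound for coefficients of R
  have hmkR : ∀ k m : ℕ, (Polynomial.X ^ k %ₘ P0).coeff m ≠ 0 → m ≤ k := by
    intro k m hk
    by_cases hkd : k < d
    · have hself : Polynomial.X ^ k %ₘ P0 = Polynomial.X ^ k := by
        refine (Polynomial.modByMonic_eq_self_iff hP0m).mpr ?_
        rw [Polynomial.degree_X_pow, hP0deg]
        exact_mod_cast hkd
      rw [hself, Polynomial.coeff_X_pow] at hk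
      by_cases hmk : m = k
      · omega
      · simp [hmk] at hk
    · push_neg at hkd
      have hne : Polynomial.X ^ k %ₘ P0 ≠ 0 := fun h => hk (by simp [h])
      have h1 : m ≤ (Polynomial.X ^ k %ₘ P0).natDegree := Polynomial.le_natDegree_of_ne_zero hk
      have h2 : (Polynomial.X ^ k %ₘ P0).natDegree < d := by
        rw [Polynomial.natDegree_lt_iff_degree_lt hne, ← hP0deg]
        exact Polynomial.degree_modByMonic_lt _ hP0m
      omega
  have hRdeg : ∀ m, (R.coeff m) ≠ 0 → (R.coeff m).totalDegree + m ≤ ρ := by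
    intro m hRm
    have hsum : (∑ k ∈ F.support,
        F.coeff k * MvPolynomial.C ((Polynomial.X ^ k %ₘ P0).coeff m)) ≠ 0 := by
      rw [← hRcoeff m]; exact hRm
    obtain ⟨k0, hk0mem, hk0ne⟩ := Finset.exists_ne_zero_of_sum_ne_zero hsum
    have hF0 : F.coeff k0 ≠ 0 := Polynomial.mem_support_iff.mp hk0mem
    have hc0 : (Polynomial.X ^ k0 %ₘ P0).coeff m ≠ 0 := by
      intro h; exact hk0ne (by rw [h]; simp)
    have hmk0 : m ≤ k0 := hmkR k0 m hc0
    have hk0ρ : (F.coeff k0).totalDegree + k0 ≤ ρ := hFk k0 hF0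
    have hbound : (R.coeff m).totalDegree ≤ ρ - m := by
      rw [hRcoeff m]
      refine (MvPolynomial.totalDegree_finset_sum _ _).trans (Finset.sup_le fun k hkmem => ?_)
      by_cases hz : F.coeff k * MvPolynomial.C ((Polynomial.X ^ k %ₘ P0).coeff m) = 0
      · rw [hz]
        simp
      · have hcz : (Polynomial.X ^ k %ₘ P0).coeff m ≠ 0 := by
          intro h; exact hz (by rw [h]; simp)
        have hFz : F.coeff k ≠ 0 := Polynomial.mem_support_iff.mp hkmem
        have h3 := hFk k hFz
        have h4 := hmkR k m hcz
        refine (MvPolynomial.totalDegree_mul _ _).trans ?_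
        rw [MvPolynomial.totalDegree_C]
        omega
    omega
  -- total degree bound for coefficients of U
  have hmkU : ∀ k m : ℕ, (Polynomial.X ^ k /ₘ P0).coeff m ≠ 0 → m + d ≤ k := by
    intro k m hk
    have hne : Polynomial.X ^ k /ₘ P0 ≠ 0 := fun h => hk (by simp [h])
    have hdk : d ≤ k := by
      by_contra hkd
      push_neg at hkd
      refine hne ((Polynomial.divByMonic_eq_zero_iff hP0m).mpr ?_)
      rw [Polynomial.degree_X_pow, hP0deg]
      exact_mod_cast hkd
    have h1 : m ≤ (Polynomial.X ^ k /ₘ P0).natDegree := Polynomial.le_natDegree_of_ne_zero hk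
    have h2 : (Polynomial.X ^ k /ₘ P0).natDegree = k - d := by
      rw [Polynomial.natDegree_divByMonic _ hP0m, Polynomial.natDegree_X_pow, hP0d]
    omega
  have hUdeg : ∀ m, (U.coeff m) ≠ 0 → (U.coeff m).totalDegree + m ≤ ρ - d := by
    intro m hUm
    have hsum : (∑ k ∈ F.support,
        F.coeff k * MvPolynomial.C ((Polynomial.X ^ k /ₘ P0).coeff m)) ≠ 0 := by
      rw [← hUcoeff m]; exact hUm
    obtain ⟨k0, hk0mem, hk0ne⟩ := Finset.exists_ne_zero_of_sum_ne_zero hsum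
    have hF0 : F.coeff k0 ≠ 0 := Polynomial.mem_support_iff.mp hk0mem
    have hc0 : (Polynomial.X ^ k0 /ₘ P0).coeff m ≠ 0 := by
      intro h; exact hk0ne (by rw [h]; simp)
    have hmk0 : m + d ≤ k0 := hmkU k0 m hc0
    have hk0ρ : (F.coeff k0).totalDegree + k0 ≤ ρ := hFk k0 hF0
    have hbound : (U.coeff m).totalDegree ≤ ρ - d - m := by
      rw [hUcoeff m]
      refine (MvPolynomial.totalDegree_finset_sum _ _).trans (Finset.sup_le fun k hkmem => ?_)
      by_cases hz : F.coeff k * MvPolynomial.C ((Polynomial.X ^ k /ₘ P0).coeff m) = 0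
      · rw [hz]
        simp
      · have hcz : (Polynomial.X ^ k /ₘ P0).coeff m ≠ 0 := by
          intro h; exact hz (by rw [h]; simp)
        have hFz : F.coeff k ≠ 0 := Polynomial.mem_support_iff.mp hkmem
        have h3 := hFk k hFz
        have h4 := hmkU k m hcz
        refine (MvPolynomial.totalDegree_mul _ _).trans ?_
        rw [MvPolynomial.totalDegree_C]
        omega
    omega
  -- total degree bound for coefficients of V
  have hVdeg : ∀ m, (V.coeff m) ≠ 0 → (V.coeff m).totalDegree + m ≤ ρ - d := by
    intro m hVm
    have hQyV : R.coeff m = Qy * V.coeff m := by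
      rw [hV, Polynomial.coeff_C_mul]
    have hRm : R.coeff m ≠ 0 := by
      rw [hQyV]
      exact mul_ne_zero hQy0 hVm
    have h1 := hRdeg m hRm
    have h2 : (e1 (R.coeff m)).natDegree ≤ (R.coeff m).totalDegree := deg_e1_le _
    have hEv : e1 (V.coeff m) ≠ 0 := fun h => hVm (by simpa using congrArg e1.symm h)
    have h3 : (e1 (R.coeff m)).natDegree = d + (e1 (V.coeff m)).natDegree := by
      have hmul : e1 (R.coeff m) = Qc * e1 (V.coeff m) := by
        rw [hQyV, map_mul, he1Qy]
      rw [hmul, Polynomial.natDegree_mul hQcm.ne_zero hEv, hQcd]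
    have h4 : (V.coeff m).totalDegree ≤ (e1 (V.coeff m)).natDegree := by
      have h5 := deg_e1_symm (e1 (V.coeff m))
      rwa [AlgEquiv.symm_apply_apply] at h5
    omega
  -- transfer P and Q
  have hEC : ∀ a : ℝ, E (MvPolynomial.C a) = Polynomial.C (MvPolynomial.C a) := by
    intro a
    rw [hE]
    simp [MvPolynomial.finSuccEquiv_apply]
  have hEP : E P = ι P0 := by
    rw [hP, map_prod, hP0, map_prod]
    refine Finset.prod_congr rfl fun i _ => ?_
    rw [map_sub, map_sub, hEC]
    have hx0 : E (MvPolynomial.X 0) = Polynomial.X := by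
      rw [hE]; exact MvPolynomial.finSuccEquiv_X_zero
    rw [hx0]
    simp [hι]
  have hEQ : E Q = Polynomial.C Qy := by
    have hx1 : E (MvPolynomial.X 1) = Polynomial.C (MvPolynomial.X 0) := by
      rw [hE]
      have h10 : (1 : Fin 2) = Fin.succ 0 := rfl
      rw [h10]
      exact MvPolynomial.finSuccEquiv_X_succ
    rw [hQ, map_prod]
    calc (∏ j : Fin d, E (MvPolynomial.X 1 - MvPolynomial.C (y j)))
        = ∏ j : Fin d, Polynomial.C (MvPolynomial.X 0 - MvPolynomial.C (y j)) :=
          Finset.prod_congr rfl fun j _ => by rw [map_sub, hx1, hEC, map_sub]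
      _ = Polynomial.C Qy := by
          rw [hQy]
          exact (map_prod (Polynomial.C : MvPolynomial (Fin 1) ℝ →+* _) _ _).symm
  refine ⟨E.symm U, E.symm V, lemA _ _ hUdeg, lemA _ _ hVdeg, ?_⟩
  have : f = E.symm (ι P0 * U + Polynomial.C Qy * V) := by
    rw [← hV, ← hFdecomp, hF, AlgEquiv.symm_apply_apply]
  rw [this, map_add, map_mul, map_mul, ← hEP, ← hEQ, AlgEquiv.symm_apply_apply,
    AlgEquiv.symm_apply_apply]
  ring
end

section
/- Let d ≥ 1, let β = (β_{ij})_{i+j ≤ 2d} be a real multisequence, let 1 ≤ n ≤ d and p(x,y) = Σ_{r+s ≤ n−1} a_{rs} x^r y^s, and suppose the column relations X^{n+i'}Y^{j'} = (x^{i'} y^{j'} p)(X,Y) hold in M_d(β) for all i', j' ≥ 0 with n + i' + j' ≤ d. Then for all f with 0 ≤ f ≤ d + 1 − n and all i, j ≥ 0 with i + j ≤ d − 1: β_{n+f+i, d+1−n−f+j} = Σ_{r+s ≤ n−1} a_{rs} β_{r+f+i, s+d+1−n−f+j}. (That is, the entries of the recursively defined extension columns X^{n+f}Y^{d+1−n−f}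 := (x^f y^{d+1−n−f} p)(X,Y), in rows of degree ≤ d−1, coincide with the moments inherited from β.) -/
open Finset Matrix

noncomputable section

/-- sum over Idx D equals sum over the finset -/
lemma sum_idx {D : ℕ} (g : ℕ × ℕ → ℝ) :
    ∑ c : Idx D, g c.1 =
      ∑ p ∈ (Finset.range (D + 1) ×ˢ Finset.range (D + 1)).filter
        (fun ij => ij.1 + ij.2 ≤ D), g p := by
  exact (Finset.sum_subtype _ (by
    rintro ⟨x, y⟩
    simp only [Finset.mem_filter, Finset.mem_product, Finset.mem_range]
    omega) (fun p => g p)).symm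

lemma key (d n i' j' : ℕ) (β a : ℕ → ℕ → ℝ) (ha : DegLE a (n - 1)) (hn1 : 1 ≤ n)
    (h : n + i' + j' ≤ d)
    (hrel : polyCol d β (shiftC i' j' (monoC n 0 - a)) = 0)
    (u v : ℕ) (huv : u + v ≤ d) :
    β (u + (n + i')) (v + j') =
      ∑ c : Idx (n - 1), a c.1.1 c.1.2 * β (u + (c.1.1 + i')) (v + (c.1.2 + j')) := by
  have h0 := congrFun hrel ⟨(u, v), huv⟩
  simp only [polyCol, Matrix.mulVec, dotProduct, momentMatrix, coeffVec, Matrix.of_apply,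
    Pi.zero_apply] at h0
  rw [sum_idx (fun p => β (u + p.1) (v + p.2) * shiftC i' j' (monoC n 0 - a) p.1 p.2)] at h0
  set Sd := (Finset.range (d + 1) ×ˢ Finset.range (d + 1)).filter
      (fun ij : ℕ × ℕ => ij.1 + ij.2 ≤ d) with hSd
  have hsplit : ∀ p : ℕ × ℕ,
      β (u + p.1) (v + p.2) * shiftC i' j' (monoC n 0 - a) p.1 p.2 =
        (if p = (n + i', j') then β (u + p.1) (v + p.2) else 0)
          - β (u + p.1) (v + p.2) * shiftC i' j' a p.1 p.2 := by
    rintro ⟨k, l⟩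
    simp only [shiftC, monoC, Pi.sub_apply, Prod.mk.injEq]
    by_cases hc : i' ≤ k ∧ j' ≤ l
    · rw [if_pos hc, if_pos hc]
      by_cases he : k = n + i' ∧ l = j'
      · rw [if_pos he, if_pos (by omega)]
        ring
      · rw [if_neg he, if_neg (by omega)]
        ring
    · rw [if_neg hc, if_neg hc, if_neg (by omega)]
      ring
  rw [Finset.sum_congr rfl (fun p _ => hsplit p), Finset.sum_sub_distrib] at h0
  have hmem : ((n + i', j') : ℕ × ℕ) ∈ Sd := by
    simp only [hSd, Finset.mem_filter, Finset.mem_product, Finset.mem_range]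
    omega
  rw [Finset.sum_ite_eq' Sd ((n + i', j') : ℕ × ℕ)
      (fun p => β (u + p.1) (v + p.2)), if_pos hmem, sub_eq_zero] at h0
  rw [h0]
  rw [sum_idx (fun p => a p.1 p.2 * β (u + (p.1 + i')) (v + (p.2 + j')))]
  set Sn := (Finset.range (n - 1 + 1) ×ˢ Finset.range (n - 1 + 1)).filter
      (fun ij : ℕ × ℕ => ij.1 + ij.2 ≤ n - 1) with hSn
  -- restrict Sd-sum to image of Sn
  have himg : Finset.image (fun p : ℕ × ℕ => (p.1 + i', p.2 + j')) Sn ⊆ Sd := by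
    intro p hp
    simp only [Finset.mem_image] at hp
    obtain ⟨q, hq, rfl⟩ := hp
    simp only [hSn, Finset.mem_filter, Finset.mem_product, Finset.mem_range] at hq
    simp only [hSd, Finset.mem_filter, Finset.mem_product, Finset.mem_range]
    omega
  rw [← Finset.sum_subset himg]
  · rw [Finset.sum_image]
    · apply Finset.sum_congr rfl
      intro p hp
      simp only [hSn, Finset.mem_filter, Finset.mem_product, Finset.mem_range] at hp
      simp only [shiftC, if_pos (by omega : i' ≤ p.1 + i' ∧ j' ≤ p.2 + j'),
        Nat.add_sub_cancel]
      ring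
    · intro p _ q _ hpq
      simp only [Prod.mk.injEq] at hpq
      exact Prod.ext (by omega) (by omega)
  · intro p hpd hpim
    by_cases hc : i' ≤ p.1 ∧ j' ≤ p.2
    · by_cases hdeg : p.1 - i' + (p.2 - j') ≤ n - 1
      · exfalso
        apply hpim
        simp only [Finset.mem_image]
        refine ⟨(p.1 - i', p.2 - j'), ?_, ?_⟩
        · simp only [hSn, Finset.mem_filter, Finset.mem_product, Finset.mem_range]
          omega
        · exact Prod.ext (by omega) (by omega)
      · simp only [shiftC, if_pos hc, ha (p.1 - i') (p.2 - j') (by omega), mul_zero]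
    · simp only [shiftC, if_neg hc, mul_zero]


/-- If the column relations `X^{n+i'}Y^{j'} = (x^{i'} y^{j'} p)(X,Y)`
hold in `M_d(β)` for all `n + i' + j' ≤ d`, where `p = Σ_{r+s ≤ n-1} a_{rs} x^r y^s`,
then the entries of the recursively defined extension columns
`X^{n+f}Y^{d+1-n-f} := (x^f y^{d+1-n-f} p)(X,Y)`, in rows of degree ≤ d-1, coincide with
the moments inherited from `β`. -/
theorem statement13 (d n : ℕ) (hd : 1 ≤ d) (hn1 : 1 ≤ n) (hnd : n ≤ d)
    (β a : ℕ → ℕ → ℝ) (ha : DegLE a (n - 1))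
    (hX : ∀ i' j' : ℕ, n + i' + j' ≤ d →
      polyCol d β (shiftC i' j' (monoC n 0 - a)) = 0) :
    ∀ f : ℕ, f ≤ d + 1 - n → ∀ i j : ℕ, i + j ≤ d - 1 →
      β (n + f + i) (d + 1 - n - f + j) =
        ∑ c : Idx (n - 1),
          a c.1.1 c.1.2 * β (c.1.1 + f + i) (c.1.2 + (d + 1 - n - f) + j) := by
  intro f hf i j hij
  set g := d + 1 - n - f with hg
  set t := i + j + 1 - n with ht
  set i' := min t (f + i) with hi'
  set j' := t - i' with hj'
  set u := f + i - i' with hu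
  set v := g + j - j' with hv
  have h1 : n + i' + j' ≤ d := by omega
  have h2 : u + v ≤ d := by omega
  have hk := key d n i' j' β a ha hn1 h1 (hX i' j' h1) u v h2
  have e1 : u + (n + i') = n + f + i := by omega
  have e2 : v + j' = g + j := by omega
  have e3 : u + i' = f + i := by omega
  have e4 : v + j' = g + j := by omega
  rw [e1, e2] at hk
  rw [hk]
  apply Finset.sum_congr rfl
  intro c _
  rw [show u + ((c : ℕ × ℕ).1 + i') = (c : ℕ × ℕ).1 + f + i by omega,
    show v + ((c : ℕ × ℕ).2 + j') = (c : ℕ × ℕ).2 + g + j by omega]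
end
end

section
/- Let d ≥ 1, let β = (β_{ij})_{i+j ≤ 2d} be a real multisequence such that M_d(β) is positive semidefinite and recursively generated, let 1 ≤ n, m ≤ d, p(x,y) = Σ_{r+s ≤ n−1} a_{rs} x^r y^s, and q(x,y) = Σ_{u+v ≤ m, v < m} b_{uv} x^u y^v, and suppose the column relations X^{n+i'}Y^{j'} = (x^{i'} y^{j'} p)(X,Y) hold for all i', j' ≥ 0 with n + i' + j' ≤ d and the column relations X^{k'}Y^{m+l'} = (x^{k'} y^{l'} q)(X,Y) hold for all k', l' ≥ 0 with m + k' + l' ≤ d. Then for all k with 0 ≤ k ≤ d + 1 − m and all i, j ≥ 0 with i + j ≤ d − 1: β_{d+1−m−k+i, m+k+j} = Σ_{u+v ≤ m, v < m} b_{uv} β_{u+d+1−m−k+i, v+k+j}. (That is, the entries of the recursively defined extension columns X^{d+1−m−k}Y^{m+k} := (x^{d+1−m−k} y^k q)(X,Y), in rows of degree ≤ d−1, coincide with the moments inherited from β.) -/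
open Finset Matrix

noncomputable section

lemma shiftC_sub (u v : ℕ) (a b : ℕ → ℕ → ℝ) :
    shiftC u v (a - b) = shiftC u v a - shiftC u v b := by
  funext k l
  simp only [shiftC, Pi.sub_apply]
  split <;> simp

lemma shiftC_mono (u v n' m' k l : ℕ) :
    shiftC u v (monoC n' m') k l = if k = u + n' ∧ l = v + m' then 1 else 0 := by
  simp only [shiftC, monoC]
  split_ifs with h1 h2 h3 h4 <;> first | rfl | omega

lemma key_rel (d m : ℕ) (β q : ℕ → ℕ → ℝ) (hq : DegLE q m)
    (k' l' : ℕ) (h : m + k' + l' ≤ d)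
    (hrel : polyCol d β (shiftC k' l' (monoC 0 m - q)) = 0)
    (r s : ℕ) (hrs : r + s ≤ d) :
    β (r + k') (s + l' + m) =
      ∑ c : Idx m, q c.1.1 c.1.2 * β (r + k' + c.1.1) (s + l' + c.1.2) := by
  have h0 := congrFun hrel ⟨(r, s), hrs⟩
  simp only [polyCol, Matrix.mulVec, dotProduct, momentMatrix, Matrix.of_apply,
    coeffVec, Pi.zero_apply, shiftC_sub, Pi.sub_apply, mul_sub, Finset.sum_sub_distrib] at h0
  have hsum1 : (∑ c : Idx d, β (r + c.1.1) (s + c.1.2) *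
      shiftC k' l' (monoC 0 m) c.1.1 c.1.2) = β (r + k') (s + l' + m) := by
    rw [Fintype.sum_eq_single (⟨(k', l' + m), by omega⟩ : Idx d)]
    · rw [shiftC_mono]
      simp [add_assoc]
    · rintro ⟨⟨c1, c2⟩, hcd⟩ hc
      rw [shiftC_mono]
      have : ¬(c1 = k' + 0 ∧ c2 = l' + m) := by
        rintro ⟨rfl, rfl⟩
        exact hc (by simp)
      rw [if_neg this, mul_zero]
  have hsum2 : (∑ c : Idx d, β (r + c.1.1) (s + c.1.2) * shiftC k' l' q c.1.1 c.1.2)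
      = ∑ c : Idx m, q c.1.1 c.1.2 * β (r + k' + c.1.1) (s + l' + c.1.2) := by
    let emb : Idx m ↪ Idx d :=
      ⟨fun c => ⟨(k' + c.1.1, l' + c.1.2), by have := c.2; omega⟩, by
        rintro ⟨⟨a, b⟩, hab⟩ ⟨⟨a', b'⟩, hab'⟩ hcc
        simp only [Subtype.mk.injEq, Prod.mk.injEq] at hcc ⊢
        omega⟩
    have hvan : ∀ x ∈ (Finset.univ : Finset (Idx d)), x ∉ Finset.univ.map emb →
        β (r + x.1.1) (s + x.1.2) * shiftC k' l' q x.1.1 x.1.2 = 0 := by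
      rintro ⟨⟨x1, x2⟩, hxd⟩ _ hx
      simp only [shiftC]
      split_ifs with hle
      · rcases Nat.lt_or_ge m (x1 - k' + (x2 - l')) with hm | hm
        · rw [hq _ _ hm, mul_zero]
        · exfalso
          apply hx
          rw [Finset.mem_map]
          exact ⟨⟨(x1 - k', x2 - l'), hm⟩, Finset.mem_univ _, by
            refine Subtype.ext (Prod.ext ?_ ?_)
            · show k' + (x1 - k') = x1
              omega
            · show l' + (x2 - l') = x2
              omega⟩
      · rw [mul_zero]
    rw [← Finset.sum_subset (Finset.subset_univ (Finset.univ.map emb)) hvan,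
      Finset.sum_map]
    refine Finset.sum_congr rfl fun c _ => ?_
    have hc := c.2
    simp only [emb, Function.Embedding.coeFn_mk, shiftC]
    rw [if_pos ⟨Nat.le_add_right _ _, Nat.le_add_right _ _⟩]
    change β (r + (k' + c.1.1)) (s + (l' + c.1.2)) * q (k' + c.1.1 - k') (l' + c.1.2 - l') = _
    simp only [Nat.add_sub_cancel_left]
    rw [mul_comm]
    congr 2 <;> omega
  rw [hsum1, hsum2] at h0
  linarith

/-- Suppose `M_d(β)` is positive semidefinite and recursively
generated, with recursive column relations coming from `X^n = p(X,Y)` and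
`Y^m = q(X,Y)`, where `q = Σ_{u+v ≤ m, v < m} b_{uv} x^u y^v`. Then the entries of the
recursively defined extension columns `X^{d+1-m-k}Y^{m+k} := (x^{d+1-m-k} y^k q)(X,Y)`,
in rows of degree ≤ d-1, coincide with the moments inherited from `β`. -/
theorem statement14 (d n m : ℕ) (hd : 1 ≤ d)
    (hn1 : 1 ≤ n) (hnd : n ≤ d) (hm1 : 1 ≤ m) (hmd : m ≤ d)
    (β p q : ℕ → ℕ → ℝ)
    (hpsd : (momentMatrix d β).PosSemidef)
    (hrg : RecursivelyGenerated d β)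
    (hp : DegLE p (n - 1)) (hq : DegLE q m) (hqm : q 0 m = 0)
    (hX : ∀ i' j' : ℕ, n + i' + j' ≤ d →
      polyCol d β (shiftC i' j' (monoC n 0 - p)) = 0)
    (hY : ∀ k' l' : ℕ, m + k' + l' ≤ d →
      polyCol d β (shiftC k' l' (monoC 0 m - q)) = 0) :
    ∀ k : ℕ, k ≤ d + 1 - m → ∀ i j : ℕ, i + j ≤ d - 1 →
      β (d + 1 - m - k + i) (m + k + j) =
        ∑ c : Idx m,
          q c.1.1 c.1.2 * β (c.1.1 + (d + 1 - m - k) + i) (c.1.2 + k + j) := by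
  intro k hk i j hij
  obtain ⟨k', l', r, s, h1, h2, h3, h4⟩ :
      ∃ k' l' r s : ℕ, r + k' = d + 1 - m - k + i ∧ s + l' = k + j ∧ r + s ≤ d ∧
        m + k' + l' ≤ d := by
    refine ⟨min (d + 1 - m - k + i) (d - m),
      min (k + j) (d - m - min (d + 1 - m - k + i) (d - m)),
      d + 1 - m - k + i - min (d + 1 - m - k + i) (d - m),
      k + j - min (k + j) (d - m - min (d + 1 - m - k + i) (d - m)), ?_, ?_, ?_, ?_⟩ <;> omega
  have key := key_rel d m β q hq k' l' h4 (hY k' l' h4) r s h3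
  rw [show d + 1 - m - k + i = r + k' from h1.symm,
    show m + k + j = s + l' + m by omega, key]
  refine Finset.sum_congr rfl fun c _ => ?_
  congr 2 <;> omega
end
end

section
/- Suppose M_d(β) is positive semidefinite, recursively generated, and its column relations are generated entirely by X^n = p(X,Y) and Y^m = q(X,Y) via recursiveness and linearity, where q(x,y) = Σ_{u+v ≤ m, v < m} b_{uv} x^u y^v. Let B(d+1) be a block with rows indexed by the monomials of degree ≤ d and columns by the monomials of degree d+1 such that (M_d B(d+1)) has moment-matrix block structure (entries of total index degree ≤ 2d equal the corresponding β_{ij}, and the degree-d row block is Hankel) and the columns of (M_d B(d+1)) satisfy every relation (x^a y^b (x^n − p))(X,Y) = 0 and (x^a y^b (y^m − q))(X,Y) = 0 of degree ≤ d+1. Then for all i, j ≥ 0 with i + j ≤ d + 1 and all f, g ≥ 0 with m + f + g ≤ d, the entries of (M_d B(d+1)) satisfy ⟨X^iY^j, X^fY^{m+g}⟩ = Σ_{u+v ≤ m, v < m} b_{uv} ⟨X^iY^j, X^{u+f}Y^{v+g}⟩, where ⟨X^iY^j, X^kY^l⟩ denotes the entry in the row indexed by x^k y^l and the column indexed by x^i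 y^j. -/
open Finset Matrix

noncomputable section

/-- The column relations of `M_d(β)` are generated entirely by `X^n = p(X,Y)` and
`Y^m = q(X,Y)` via recursiveness and linearity. -/
def GeneratedBy (d n m : ℕ) (β p q : ℕ → ℕ → ℝ) : Prop :=
  1 ≤ n ∧ n ≤ d ∧ 1 ≤ m ∧ m ≤ d ∧
  DegLE p (n - 1) ∧ DegLE q m ∧ q 0 m = 0 ∧
  polyCol d β (monoC n 0 - p) = 0 ∧
  polyCol d β (monoC 0 m - q) = 0 ∧
  ∀ v : Idx d → ℝ,
    momentMatrix d β *ᵥ v = 0 ↔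
      v ∈ Submodule.span ℝ
        {w : Idx d → ℝ |
          (∃ i j : ℕ, n + i + j ≤ d ∧ w = coeffVec d (shiftC i j (monoC n 0 - p))) ∨
          (∃ k l : ℕ, m + k + l ≤ d ∧ w = coeffVec d (shiftC k l (monoC 0 m - q)))}

/-- The `(row (k,l), column (i,j))` entry of the augmented matrix `(M_d  B(d+1))`,
where rows have degree ≤ d and columns degree ≤ d+1 (value 0 outside this range). -/
def augEntry (d : ℕ) (β : ℕ → ℕ → ℝ) (B : Matrix (Idx d) (Jdx (d + 1)) ℝ)
    (k l i j : ℕ) : ℝ :=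
  if hr : k + l ≤ d then
    if i + j ≤ d then β (k + i) (l + j)
    else if hc : i + j = d + 1 then B ⟨(k, l), hr⟩ ⟨(i, j), hc⟩
    else 0
  else 0

/-- The column relation `w(X,Y) = 0` holds among the columns of `(M_d  B(d+1))`. -/
def AugRel (d : ℕ) (β : ℕ → ℕ → ℝ) (B : Matrix (Idx d) (Jdx (d + 1)) ℝ)
    (w : ℕ → ℕ → ℝ) : Prop :=
  ∀ k l : ℕ, k + l ≤ d →
    ∑ c : Idx (d + 1), w c.1.1 c.1.2 * augEntry d β B k l c.1.1 c.1.2 = 0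

/-- `(M_d  B(d+1))` is recursively generated for polynomials of degree ≤ d+1. -/
def AugRecGen (d : ℕ) (β : ℕ → ℕ → ℝ) (B : Matrix (Idx d) (Jdx (d + 1)) ℝ) : Prop :=
  ∀ a b : ℕ → ℕ → ℝ, DegLE a (d + 1) → DegLE b (d + 1) → DegLE (cMul a b) (d + 1) →
    AugRel d β B a → AugRel d β B (cMul a b)

lemma sum_mono (D u v : ℕ) (h : u + v ≤ D) (E : ℕ → ℕ → ℝ) :
    ∑ c : Idx D, monoC u v c.1.1 c.1.2 * E c.1.1 c.1.2 = E u v := by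
  rw [Finset.sum_eq_single (⟨(u, v), h⟩ : Idx D)]
  · simp [monoC]
  · rintro ⟨⟨x, y⟩, hxy⟩ - hne
    simp only [monoC]
    rw [if_neg, zero_mul]
    rintro ⟨rfl, rfl⟩
    exact hne rfl
  · intro h'
    exact absurd (Finset.mem_univ _) h'

lemma sum_shiftC (D M a b : ℕ) (hm : M + a + b ≤ D) (q : ℕ → ℕ → ℝ) (hq : DegLE q M)
    (E : ℕ → ℕ → ℝ) :
    ∑ c : Idx D, shiftC a b q c.1.1 c.1.2 * E c.1.1 c.1.2 =
      ∑ c : Idx M, q c.1.1 c.1.2 * E (c.1.1 + a) (c.1.2 + b) := by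
  classical
  rw [← Finset.sum_filter_of_ne
    (p := fun c : Idx D => a ≤ c.1.1 ∧ b ≤ c.1.2 ∧ (c.1.1 - a) + (c.1.2 - b) ≤ M)
    (fun x _ hx => by
      rcases x with ⟨⟨x, y⟩, hxy⟩
      dsimp only at hx ⊢
      simp only [shiftC] at hx
      by_cases hab : a ≤ x ∧ b ≤ y
      · refine ⟨hab.1, hab.2, ?_⟩
        by_contra hgt
        rw [if_pos hab, hq _ _ (by omega), zero_mul] at hx
        exact hx rfl
      · rw [if_neg hab, zero_mul] at hx
        exact absurd rfl hx)]
  refine Finset.sum_bij'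
    (fun (c : Idx D) hc =>
      (⟨(c.1.1 - a, c.1.2 - b), ((Finset.mem_filter.mp hc).2).2.2⟩ : Idx M))
    (fun (c : Idx M) _ =>
      (⟨(c.1.1 + a, c.1.2 + b), by
        have := c.2
        show c.1.1 + a + (c.1.2 + b) ≤ D
        omega⟩ : Idx D))
    (fun c hc => Finset.mem_univ _)
    (fun c _ => Finset.mem_filter.mpr ⟨Finset.mem_univ _, by
      have := c.2
      refine ⟨Nat.le_add_left _ _, Nat.le_add_left _ _, ?_⟩
      show c.1.1 + a - a + (c.1.2 + b - b) ≤ M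
      omega⟩)
    (fun c hc => by
      obtain ⟨h1, h2, h3⟩ := (Finset.mem_filter.mp hc).2
      apply Subtype.ext
      show (c.1.1 - a + a, c.1.2 - b + b) = c.1
      rw [Prod.ext_iff]
      constructor <;> simp <;> omega)
    (fun c hc => by
      apply Subtype.ext
      show (c.1.1 + a - a, c.1.2 + b - b) = c.1
      rw [Prod.ext_iff]
      constructor <;> simp)
    (fun c hc => by
      obtain ⟨h1, h2, h3⟩ := (Finset.mem_filter.mp hc).2
      simp only [shiftC, if_pos (And.intro h1 h2)]
      rw [Nat.sub_add_cancel h1, Nat.sub_add_cancel h2])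

lemma aug_beta (d : ℕ) (β : ℕ → ℕ → ℝ) (B : Matrix (Idx d) (Jdx (d + 1)) ℝ)
    (k l c1 c2 : ℕ) (h : k + l ≤ d) (h' : c1 + c2 ≤ d) :
    augEntry d β B k l c1 c2 = β (k + c1) (l + c2) := by
  unfold augEntry
  rw [dif_pos h, if_pos h']

lemma aug_B (d : ℕ) (β : ℕ → ℕ → ℝ) (B : Matrix (Idx d) (Jdx (d + 1)) ℝ)
    (k l c1 c2 : ℕ) (h : k + l ≤ d) (h' : c1 + c2 = d + 1) :
    augEntry d β B k l c1 c2 = B ⟨(k, l), h⟩ ⟨(c1, c2), h'⟩ := by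
  unfold augEntry
  rw [dif_pos h, if_neg (by omega), dif_pos h']

lemma aug_shift (d : ℕ) (β : ℕ → ℕ → ℝ) (B : Matrix (Idx d) (Jdx (d + 1)) ℝ)
    (hBold : ∀ (r : Idx d) (c : Jdx (d + 1)), r.1.1 + r.1.2 ≤ d - 1 →
      B r c = β (r.1.1 + c.1.1) (r.1.2 + c.1.2))
    (hBhankel : ∀ (r r' : Idx d) (c c' : Jdx (d + 1)),
      r.1.1 + r.1.2 = d → r'.1.1 + r'.1.2 = d →
      r.1.1 + c.1.1 = r'.1.1 + c'.1.1 → r.1.2 + c.1.2 = r'.1.2 + c'.1.2 →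
      B r c = B r' c')
    (k l c1 c2 k' l' c1' c2' : ℕ)
    (hr : k + l ≤ d) (hr' : k' + l' ≤ d)
    (hc : c1 + c2 ≤ d + 1) (hc' : c1' + c2' ≤ d + 1)
    (h1 : k + c1 = k' + c1') (h2 : l + c2 = l' + c2') :
    augEntry d β B k l c1 c2 = augEntry d β B k' l' c1' c2' := by
  by_cases hA : c1 + c2 ≤ d <;> by_cases hB' : c1' + c2' ≤ d
  · rw [aug_beta d β B _ _ _ _ hr hA, aug_beta d β B _ _ _ _ hr' hB', h1, h2]
  · have hceq : c1' + c2' = d + 1 := by omega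
    rw [aug_beta d β B _ _ _ _ hr hA, aug_B d β B _ _ _ _ hr' hceq,
      hBold _ _ (by omega : k' + l' ≤ d - 1)]
    show β (k + c1) (l + c2) = β (k' + c1') (l' + c2')
    rw [h1, h2]
  · have hceq : c1 + c2 = d + 1 := by omega
    rw [aug_beta d β B _ _ _ _ hr' hB', aug_B d β B _ _ _ _ hr hceq,
      hBold _ _ (by omega : k + l ≤ d - 1)]
    show β (k + c1) (l + c2) = β (k' + c1') (l' + c2')
    rw [h1, h2]
  · have e : c1 + c2 = d + 1 := by omega
    have e' : c1' + c2' = d + 1 := by omega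
    rw [aug_B d β B _ _ _ _ hr e, aug_B d β B _ _ _ _ hr' e']
    by_cases hdeg : k + l = d
    · exact hBhankel _ _ _ _ hdeg (by omega : k' + l' = d) h1 h2
    · rw [hBold _ _ (by omega : k + l ≤ d - 1),
        hBold _ _ (by omega : k' + l' ≤ d - 1)]
      show β (k + c1) (l + c2) = β (k' + c1') (l' + c2')
      rw [h1, h2]

/-- Under the hypotheses of Theorem main, with
`q = Σ_{u+v ≤ m, v < m} b_{uv} x^u y^v`, the rows of `(M_d  B(d+1))` of the form
`X^fY^{m+g}` (`m + f + g ≤ d`) are recursively determined from row `Y^m`: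
`⟨X^iY^j, X^fY^{m+g}⟩ = Σ_{u+v ≤ m, v < m} b_{uv} ⟨X^iY^j, X^{u+f}Y^{v+g}⟩` for all
`i + j ≤ d + 1`. -/
theorem statement16 (d n m : ℕ) (hd : 1 ≤ d) (β p q : ℕ → ℕ → ℝ)
    (hpsd : (momentMatrix d β).PosSemidef)
    (hrg : RecursivelyGenerated d β)
    (hgen : GeneratedBy d n m β p q)
    (B : Matrix (Idx d) (Jdx (d + 1)) ℝ)
    (hBold : ∀ (r : Idx d) (c : Jdx (d + 1)), r.1.1 + r.1.2 ≤ d - 1 →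
      B r c = β (r.1.1 + c.1.1) (r.1.2 + c.1.2))
    (hBhankel : ∀ (r r' : Idx d) (c c' : Jdx (d + 1)),
      r.1.1 + r.1.2 = d → r'.1.1 + r'.1.2 = d →
      r.1.1 + c.1.1 = r'.1.1 + c'.1.1 → r.1.2 + c.1.2 = r'.1.2 + c'.1.2 →
      B r c = B r' c')
    (hrelX : ∀ a b : ℕ, n + a + b ≤ d + 1 → AugRel d β B (shiftC a b (monoC n 0 - p)))
    (hrelY : ∀ a b : ℕ, m + a + b ≤ d + 1 → AugRel d β B (shiftC a b (monoC 0 m - q))) :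
    ∀ i j : ℕ, i + j ≤ d + 1 → ∀ f g : ℕ, m + f + g ≤ d →
      augEntry d β B f (m + g) i j =
        ∑ c : Idx m,
          q c.1.1 c.1.2 * augEntry d β B (c.1.1 + f) (c.1.2 + g) i j := by
  obtain ⟨hn1, hnd, hm1, hmd, hpdeg, hqdeg, hq0m, -, -, -⟩ := hgen
  intro i j hij f g hfg
  set t := f + g + i + j - d with ht
  set a := min t (f + i) with ha
  set b := t - a with hb
  have haf : a ≤ f + i := min_le_right _ _
  have hat : a ≤ t := min_le_left _ _
  have hbg : b ≤ g + j := by omega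
  have hmab : m + a + b ≤ d + 1 := by omega
  set k := f + i - a with hk
  set l := g + j - b with hl
  have hkl : k + l ≤ d := by omega
  have hrel := hrelY a b hmab k l hkl
  have hsplit : ∀ c1 c2 : ℕ, shiftC a b (monoC 0 m - q) c1 c2 =
      monoC a (m + b) c1 c2 - shiftC a b q c1 c2 := by
    intro c1 c2
    simp only [shiftC, monoC, Pi.sub_apply]
    by_cases hab : a ≤ c1 ∧ b ≤ c2
    · rw [if_pos hab, if_pos hab]
      congr 1
      by_cases hc : c1 = a ∧ c2 = m + b
      · rw [if_pos hc, if_pos (by omega)]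
      · rw [if_neg hc, if_neg (by omega)]
    · rw [if_neg hab, if_neg hab, if_neg (by omega), zero_sub, neg_zero]
  simp only [hsplit, sub_mul, Finset.sum_sub_distrib] at hrel
  rw [sum_mono (d + 1) a (m + b) (by omega) (augEntry d β B k l),
    sum_shiftC (d + 1) m a b hmab q hqdeg (augEntry d β B k l), sub_eq_zero] at hrel
  rw [aug_shift d β B hBold hBhankel f (m + g) i j k l a (m + b)
    (by omega) hkl hij (by omega) (by omega) (by omega), hrel]
  refine Finset.sum_congr rfl fun c _ => ?_
  have hc := c.2
  rw [aug_shift d β B hBold hBhankel k l (c.1.1 + a) (c.1.2 + b)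
    (c.1.1 + f) (c.1.2 + g) i j hkl (by omega) (by omega) hij (by omega) (by omega)]
end
end
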